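/- Let 0 < u₁ < p < u₂. For q, x > 0 set h(x,q) = q/(q+x), and for j = 1,2 set f_j(x) = d( h(x,p) | h(x,u_j) ), where d(q|r) = q·log(q/r) + (1−q)·log((1−q)/(1−r)). Set a_j = p − u_j + p·log(u_j/p), b_j = p² + u_j·p·(log(u_j/p) − 1), and x_j* = −b_j/a_j. Then the ratio H(x) = f₁'(x)/f₂'(x) is strictly decreasing on (x₁*, x₂*): for all x, y with x₁* < x < y < x₂*, f₁'(x)/f₂'(x) > f₁'(y)/f₂'(y). -/

import Mathlib

/-- Kullback–Leibler divergence between Bernoulli distributions with means `q` and `r`. -/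
noncomputable def klBern (q r : ℝ) : ℝ :=
  q * Real.log (q / r) + (1 - q) * Real.log ((1 - q) / (1 - r))

lemma kl_simp_eq (p u z : ℝ) (hp : 0 < p) (hu : 0 < u) (hz : 0 < z) :
    klBern (p / (p + z)) (u / (u + z)) =
      p * (Real.log p - Real.log u) * (p + z)⁻¹ + Real.log (u + z) - Real.log (p + z) := by
  have hpz : 0 < p + z := by linarith
  have huz : 0 < u + z := by linarith
  have e1 : 1 - p / (p + z) = z / (p + z) := by field_simp; ring
  have e2 : 1 - u / (u + z) = z / (u + z) := by field_simp; ring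
  unfold klBern
  rw [e1, e2, Real.log_div (by positivity) (by positivity),
    Real.log_div (by positivity) (by positivity),
    Real.log_div (by positivity) (by positivity),
    Real.log_div (by positivity) (by positivity),
    Real.log_div (by positivity) (by positivity),
    Real.log_div (by positivity) (by positivity)]
  field_simp
  ring

lemma deriv_kl (p u x : ℝ) (hp : 0 < p) (hu : 0 < u) (hx : 0 < x) :
    deriv (fun z => klBern (p / (p + z)) (u / (u + z))) x =
      ((p - u + p * Real.log (u / p)) * x + (p ^ 2 + u * p * (Real.log (u / p) - 1))) /
        ((u + x) * (p + x) ^ 2) := by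
  have hpx : 0 < p + x := by linarith
  have hux : 0 < u + x := by linarith
  have hev : (fun z => klBern (p / (p + z)) (u / (u + z))) =ᶠ[nhds x]
      (fun z => p * (Real.log p - Real.log u) * (p + z)⁻¹ + Real.log (u + z) - Real.log (p + z)) := by
    filter_upwards [eventually_gt_nhds hx] with z hz
    exact kl_simp_eq p u z hp hu hz
  rw [hev.deriv_eq]
  have A : HasDerivAt (fun z : ℝ => p + z) 1 x := (hasDerivAt_id x).const_add p
  have B : HasDerivAt (fun z : ℝ => u + z) 1 x := (hasDerivAt_id x).const_add u
  have hinv := A.inv hpx.ne'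
  have hlogp := A.log hpx.ne'
  have hlogu := B.log hux.ne'
  have hd := (((hinv.const_mul (p * (Real.log p - Real.log u))).add hlogu).sub hlogp)
  rw [(show HasDerivAt (fun z => p * (Real.log p - Real.log u) * (p + z)⁻¹ + Real.log (u + z) - Real.log (p + z)) _ x from hd).deriv]
  have hlog : Real.log (u / p) = Real.log u - Real.log p := Real.log_div hu.ne' hp.ne'
  rw [hlog]
  field_simp
  ring

lemma a_neg (p u : ℝ) (hp : 0 < p) (hu : 0 < u) (hne : u ≠ p) :
    p - u + p * Real.log (u / p) < 0 := by
  have h := Real.log_lt_sub_one_of_pos (div_pos hu hp) (by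
    intro h; apply hne; field_simp at h; linarith)
  have : p * Real.log (u / p) < p * (u / p - 1) := mul_lt_mul_of_pos_left h hp
  have e : p * (u / p - 1) = u - p := by field_simp
  linarith

lemma b_pos (p u : ℝ) (hp : 0 < p) (hu : 0 < u) (hne : u ≠ p) :
    0 < p ^ 2 + u * p * (Real.log (u / p) - 1) := by
  have h := Real.log_lt_sub_one_of_pos (div_pos hp hu) (by
    intro h; apply hne; field_simp at h; linarith)
  have hlog : Real.log (p / u) = - Real.log (u / p) := by
    rw [← Real.log_inv]; congr 1; field_simp
  rw [hlog] at h
  have : u * p * (Real.log (u / p) - 1) > u * p * (- (p / u - 1) - 1) :=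
    mul_lt_mul_of_pos_left (by linarith) (by positivity)
  have e : u * p * (- (p / u - 1) - 1) = - p ^ 2 := by field_simp; ring
  nlinarith

lemma key_poly (s t x y u₁ u₂ : ℝ) (hu₁ : 0 < u₁) (hu : u₁ < u₂) (hs : 0 < s)
    (hsx : s < x) (hxy : x < y) (hyt : y < t) :
    (x - s) * (t - y) * ((u₂ + x) * (u₁ + y)) < (y - s) * (t - x) * ((u₂ + y) * (u₁ + x)) := by
  have hid : (y - s) * (t - x) * ((u₂ + y) * (u₁ + x)) - (x - s) * (t - y) * ((u₂ + x) * (u₁ + y))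
      = (y - x) * ((x - s) * (u₁ + x) * (u₂ + x) + (t - y) * (u₂ + x) * (u₁ + s)
        + (x - s) * (t - y) * (u₁ + x) + (y - x) * ((x - s) + (t - y)) * (u₁ + x)
        + (y - x) * (u₁ + x) * (u₂ + x) + (y - x) ^ 2 * (u₁ + x)) := by ring
  nlinarith [mul_pos (mul_pos (show (0:ℝ) < x - s by linarith) (show (0:ℝ) < u₁ + x by linarith)) (show (0:ℝ) < u₂ + x by linarith),
    mul_pos (mul_pos (show (0:ℝ) < t - y by linarith) (show (0:ℝ) < u₂ + x by linarith)) (show (0:ℝ) < u₁ + s by linarith),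
    mul_pos (mul_pos (show (0:ℝ) < x - s by linarith) (show (0:ℝ) < t - y by linarith)) (show (0:ℝ) < u₁ + x by linarith),
    mul_pos (mul_pos (show (0:ℝ) < y - x by linarith) (show (0:ℝ) < (x - s) + (t - y) by linarith)) (show (0:ℝ) < u₁ + x by linarith),
    mul_pos (mul_pos (show (0:ℝ) < y - x by linarith) (show (0:ℝ) < u₁ + x by linarith)) (show (0:ℝ) < u₂ + x by linarith),
    mul_pos (mul_pos (show (0:ℝ) < y - x by linarith) (show (0:ℝ) < y - x by linarith)) (show (0:ℝ) < u₁ + x by linarith)]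

lemma ratio_eq (A B C D E : ℝ) (hC : C ≠ 0) (_hD : D ≠ 0) (hE : E ≠ 0) (hB : B ≠ 0) :
    (A / (C * E)) / (B / (D * E)) = (A * D) / (B * C) := by
  field_simp

set_option maxHeartbeats 1000000 in
/-- Theorem 13(a) for h(x,p) = p/(p+x): the ratio f₁'/f₂' of the derivatives of
the two Kullback–Leibler divergence curves is strictly decreasing on (x₁*, x₂*). -/
theorem ratio_strict_anti_basic
    (p u₁ u₂ : ℝ) (h0 : 0 < u₁) (h1 : u₁ < p) (h2 : p < u₂)
    (a₁ a₂ b₁ b₂ x₁s x₂s : ℝ)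
    (ha₁ : a₁ = p - u₁ + p * Real.log (u₁ / p))
    (ha₂ : a₂ = p - u₂ + p * Real.log (u₂ / p))
    (hb₁ : b₁ = p ^ 2 + u₁ * p * (Real.log (u₁ / p) - 1))
    (hb₂ : b₂ = p ^ 2 + u₂ * p * (Real.log (u₂ / p) - 1))
    (hx₁s : x₁s = -b₁ / a₁) (hx₂s : x₂s = -b₂ / a₂) :
    ∀ x y : ℝ, x₁s < x → x < y → y < x₂s →
      deriv (fun z => klBern (p / (p + z)) (u₁ / (u₁ + z))) y /
          deriv (fun z => klBern (p / (p + z)) (u₂ / (u₂ + z))) y <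
        deriv (fun z => klBern (p / (p + z)) (u₁ / (u₁ + z))) x /
          deriv (fun z => klBern (p / (p + z)) (u₂ / (u₂ + z))) x := by
  intro x y hx hxy hy
  have hp : 0 < p := h0.trans h1
  have hu₂ : 0 < u₂ := hp.trans h2
  have ha1n : a₁ < 0 := ha₁ ▸ a_neg p u₁ hp h0 (ne_of_lt h1)
  have ha2n : a₂ < 0 := ha₂ ▸ a_neg p u₂ hp hu₂ (ne_of_gt h2)
  have hb1p : 0 < b₁ := hb₁ ▸ b_pos p u₁ hp h0 (ne_of_lt h1)
  have hb2p : 0 < b₂ := hb₂ ▸ b_pos p u₂ hp hu₂ (ne_of_gt h2)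
  have hx1pos : 0 < x₁s := by
    rw [hx₁s, show -b₁ / a₁ = b₁ / (-a₁) by ring]
    exact div_pos hb1p (by linarith)
  have h0x : 0 < x := hx1pos.trans hx
  have h0y : 0 < y := h0x.trans hxy
  have hb1e : b₁ = -(a₁ * x₁s) := by
    rw [hx₁s]; field_simp
    exact (div_self (ne_of_lt ha1n)).symm
  have hb2e : b₂ = -(a₂ * x₂s) := by
    rw [hx₂s]; field_simp
    exact (div_self (ne_of_lt ha2n)).symm
  -- sign facts on the interval
  have hL1x : a₁ * x + b₁ < 0 := by nlinarith [mul_pos (show (0:ℝ) < -a₁ by linarith) (show (0:ℝ) < x - x₁s by linarith)]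
  have hL1y : a₁ * y + b₁ < 0 := by nlinarith [mul_pos (show (0:ℝ) < -a₁ by linarith) (show (0:ℝ) < y - x₁s by linarith)]
  have hL2x : 0 < a₂ * x + b₂ := by nlinarith [mul_pos (show (0:ℝ) < -a₂ by linarith) (show (0:ℝ) < x₂s - x by linarith)]
  have hL2y : 0 < a₂ * y + b₂ := by nlinarith [mul_pos (show (0:ℝ) < -a₂ by linarith) (show (0:ℝ) < x₂s - y by linarith)]
  -- rewrite the derivatives
  rw [deriv_kl p u₁ x hp h0 h0x, deriv_kl p u₂ x hp hu₂ h0x,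
    deriv_kl p u₁ y hp h0 h0y, deriv_kl p u₂ y hp hu₂ h0y,
    ← ha₁, ← ha₂, ← hb₁, ← hb₂]
  rw [ratio_eq _ _ _ _ _ (by positivity) (by positivity) (by positivity) (ne_of_gt hL2y),
    ratio_eq _ _ _ _ _ (by positivity) (by positivity) (by positivity) (ne_of_gt hL2x)]
  rw [div_lt_div_iff₀ (by positivity) (by positivity)]
  have hkey := key_poly x₁s x₂s x y u₁ u₂ h0 (h1.trans h2) hx1pos hx hxy hy
  have hc : 0 < a₁ * a₂ := mul_pos_of_neg_of_neg ha1n ha2n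
  have hmul := mul_lt_mul_of_pos_left hkey hc
  have e1 : (a₁ * y + b₁) * (u₂ + y) * ((a₂ * x + b₂) * (u₁ + x))
      = -(a₁ * a₂ * ((y - x₁s) * (x₂s - x) * ((u₂ + y) * (u₁ + x)))) := by
    rw [hb1e, hb2e]; ring
  have e2 : (a₁ * x + b₁) * (u₂ + x) * ((a₂ * y + b₂) * (u₁ + y))
      = -(a₁ * a₂ * ((x - x₁s) * (x₂s - y) * ((u₂ + x) * (u₁ + y)))) := by
    rw [hb1e, hb2e]; ring
  nlinarith [hmul, e1, e2]
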